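/- Let s ∈ (0,1) and n ≥ 2 an integer. There exists a constant C₁ > 0 depending only on n and s such that for every x ∈ B₁(0), ∫_{B₁(0)^c} |x − y|^{−(n+2s)} dy ≥ C₁ · (1 − |x|)^{−2s}, where the integral is with respect to Lebesgue measure on ℝⁿ. -/

import Mathlib

open MeasureTheory Metric Set Filter

noncomputable section

/-- boundary estimate (2.34): the exterior integral of the
fractional kernel blows up like the inverse `2s`-power of the boundary distance. -/
theorem exterior_kernel_integral_lower_bound
    (n : ℕ) (hn : 2 ≤ n) (s : ℝ) (hs : s ∈ Set.Ioo (0 : ℝ) 1) :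
    ∃ C₁ : ℝ, 0 < C₁ ∧
      ∀ x ∈ Metric.ball (0 : EuclideanSpace ℝ (Fin n)) 1,
        C₁ * (1 - ‖x‖) ^ (-(2 * s)) ≤
          ∫ y in (Metric.ball (0 : EuclideanSpace ℝ (Fin n)) 1)ᶜ,
            dist x y ^ (-((n : ℝ) + 2 * s)) := by
  classical
  set r : ℝ := (n : ℝ) + 2 * s with hr_def
  have hr_pos : 0 < r := by
    have : (0:ℝ) < (n:ℝ) := by positivity
    nlinarith [hs.1]
  have hnr : (n : ℝ) < r := by nlinarith [hs.1]
  set V : ℝ := (volume (Metric.ball (0 : EuclideanSpace ℝ (Fin n)) 1)).toReal with hV_def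
  have hV_pos : 0 < V := by
    rw [hV_def]
    have h1 : 0 < volume (Metric.ball (0 : EuclideanSpace ℝ (Fin n)) 1) :=
      measure_ball_pos _ _ one_pos
    have h2 : volume (Metric.ball (0 : EuclideanSpace ℝ (Fin n)) 1) < ⊤ :=
      measure_ball_lt_top
    exact ENNReal.toReal_pos h1.ne' h2.ne
  refine ⟨(3 : ℝ) ^ (-r) * V, by positivity, ?_⟩
  intro x hx
  set d : ℝ := 1 - ‖x‖ with hd_def
  have hx1 : ‖x‖ < 1 := by simpa using hx
  have hd : 0 < d := by simp [hd_def]; linarith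
  -- a center `c` at distance `2d` from `x`, with `‖c‖ = ‖x‖ + 2d`
  obtain ⟨c, hc1, hc2⟩ : ∃ c : EuclideanSpace ℝ (Fin n),
      ‖c‖ = ‖x‖ + 2 * d ∧ dist x c = 2 * d := by
    by_cases hx0 : x = 0
    · haveI : NeZero n := ⟨by omega⟩
      have hkey : ‖(2 * d) • EuclideanSpace.single (0 : Fin n) (1 : ℝ)‖ = 2 * d := by
        rw [norm_smul, EuclideanSpace.norm_single, norm_one, mul_one, Real.norm_eq_abs,
          abs_of_pos (by linarith : (0:ℝ) < 2 * d)]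
      refine ⟨(2 * d) • EuclideanSpace.single (0 : Fin n) (1 : ℝ), ?_, ?_⟩
      · rw [hkey, hx0, norm_zero, zero_add]
      · rw [hx0, dist_zero_left, hkey]
    · have hxn : 0 < ‖x‖ := norm_pos_iff.mpr hx0
      refine ⟨(1 + 2 * d / ‖x‖) • x, ?_, ?_⟩
      · rw [norm_smul]
        rw [Real.norm_eq_abs, abs_of_pos (by positivity)]
        field_simp
      · rw [dist_eq_norm]
        have heq : x - (1 + 2 * d / ‖x‖) • x = (-(2 * d / ‖x‖)) • x := by module
        rw [heq, norm_smul, Real.norm_eq_abs, abs_neg, abs_of_pos (by positivity)]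
        field_simp
  -- the small ball `ball c d` is contained in the exterior region
  have hsub : Metric.ball c d ⊆ (Metric.ball (0 : EuclideanSpace ℝ (Fin n)) 1)ᶜ := by
    intro y hy
    simp only [Set.mem_compl_iff, Metric.mem_ball, not_lt]
    have h1 : dist c y < d := by rwa [Metric.mem_ball, dist_comm] at hy
    have h2 : ‖c‖ - ‖c - y‖ ≤ ‖y‖ := by
      have := norm_sub_norm_le c y
      linarith [this]
    rw [← dist_eq_norm] at h2
    have : dist y 0 = ‖y‖ := by simp
    rw [this]
    have : ‖x‖ + 2 * d - d ≤ ‖y‖ := by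
      rw [hc1] at h2; linarith
    linarith [hd_def ▸ this]
  -- integrability of the kernel on the exterior region
  have hmeas : Measurable fun y : EuclideanSpace ℝ (Fin n) => dist x y ^ (-r) :=
    (measurable_const.dist measurable_id).pow_const _
  have hInt : IntegrableOn (fun y : EuclideanSpace ℝ (Fin n) => dist x y ^ (-r))
      (Metric.ball (0 : EuclideanSpace ℝ (Fin n)) 1)ᶜ volume := by
    have hg : Integrable (fun y : EuclideanSpace ℝ (Fin n) =>
        (1 + 1 / d) ^ r * (1 + ‖y - x‖) ^ (-r)) volume := by
      have h0 : Integrable (fun y : EuclideanSpace ℝ (Fin n) => (1 + ‖y‖) ^ (-r)) volume := by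
        apply integrable_one_add_norm
        rwa [finrank_euclideanSpace_fin]
      exact (h0.comp_sub_right x).const_mul _
    refine Integrable.mono' hg.restrict hmeas.aestronglyMeasurable ?_
    filter_upwards [ae_restrict_mem (measurableSet_ball.compl)] with y hy
    have hdy : d ≤ dist x y := by
      simp only [Set.mem_compl_iff, Metric.mem_ball, not_lt] at hy
      have : 1 - ‖x‖ ≤ ‖y‖ - ‖x‖ := by
        have hy' : (1:ℝ) ≤ ‖y‖ := by simpa [dist_eq_norm] using hy
        linarith
      calc d = 1 - ‖x‖ := hd_def
        _ ≤ ‖y‖ - ‖x‖ := this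
        _ ≤ ‖y - x‖ := by linarith [norm_sub_norm_le y x]
        _ = dist x y := by rw [dist_eq_norm, norm_sub_rev]
    have hdy0 : 0 < dist x y := lt_of_lt_of_le hd hdy
    rw [Real.norm_eq_abs, abs_of_nonneg (Real.rpow_nonneg dist_nonneg _)]
    have key : 1 + ‖y - x‖ ≤ (1 + 1 / d) * dist x y := by
      have : dist x y = ‖y - x‖ := by rw [dist_eq_norm, norm_sub_rev]
      rw [this] at hdy hdy0 ⊢
      have h1 : (1:ℝ) ≤ ‖y - x‖ / d := (one_le_div hd).mpr hdy
      have : 1 + ‖y - x‖ ≤ ‖y - x‖ / d + ‖y - x‖ := by linarith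
      calc 1 + ‖y - x‖ ≤ ‖y - x‖ / d + ‖y - x‖ := this
        _ = (1 + 1 / d) * ‖y - x‖ := by field_simp; ring
    have h1 : ((1 + 1 / d) * dist x y) ^ (-r) ≤ (1 + ‖y - x‖) ^ (-r) :=
      Real.rpow_le_rpow_of_nonpos (by positivity) key (by linarith)
    have h2 : ((1 + 1 / d) * dist x y) ^ (-r)
        = (1 + 1 / d) ^ (-r) * dist x y ^ (-r) :=
      Real.mul_rpow (by positivity) dist_nonneg
    have h3 : dist x y ^ (-r) = (1 + 1 / d) ^ r * ((1 + 1 / d) ^ (-r) * dist x y ^ (-r)) := by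
      rw [← mul_assoc, ← Real.rpow_add (by positivity), add_neg_cancel, Real.rpow_zero, one_mul]
    rw [h3]
    have h4 : (0:ℝ) < (1 + 1/d) ^ r := Real.rpow_pos_of_pos (by positivity) _
    calc (1 + 1 / d) ^ r * ((1 + 1 / d) ^ (-r) * dist x y ^ (-r))
        = (1 + 1/d) ^ r * ((1 + 1 / d) * dist x y) ^ (-r) := by rw [h2]
      _ ≤ (1 + 1/d) ^ r * (1 + ‖y - x‖) ^ (-r) := by
          exact mul_le_mul_of_nonneg_left h1 h4.le
  -- lower bound on the small ball
  have hIntBall : IntegrableOn (fun y : EuclideanSpace ℝ (Fin n) => dist x y ^ (-r))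
      (Metric.ball c d) volume := hInt.mono_set hsub
  have hlow : ∀ y ∈ Metric.ball c d, (3 * d) ^ (-r) ≤ dist x y ^ (-r) := by
    intro y hy
    have h1 : dist c y < d := by rwa [Metric.mem_ball, dist_comm] at hy
    have h2 : dist x y ≤ dist x c + dist c y := dist_triangle x c y
    have h3 : dist x y < 3 * d := by rw [hc2] at h2; linarith
    have h4 : 0 < dist x y := by
      have := dist_triangle x y c
      rw [hc2] at this
      have : 2 * d - dist y c ≤ dist x y := by linarith
      rw [dist_comm] at this
      linarith
    exact Real.rpow_le_rpow_of_nonpos h4 h3.le (by linarith)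
  haveI : NeZero n := ⟨by omega⟩
  haveI : Nontrivial (EuclideanSpace ℝ (Fin n)) := by
    refine nontrivial_of_ne (EuclideanSpace.single (0 : Fin n) (1 : ℝ)) 0 ?_
    intro h
    have := congrArg norm h
    rw [EuclideanSpace.norm_single, norm_one, norm_zero] at this
    exact one_ne_zero this
  have hvol : (volume (Metric.ball c d)).toReal = d ^ n * V := by
    rw [Measure.addHaar_ball _ c hd.le, finrank_euclideanSpace_fin,
      ENNReal.toReal_mul, ENNReal.toReal_ofReal (by positivity)]
  have step1 : (3 * d) ^ (-r) * (d ^ n * V) ≤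
      ∫ y in Metric.ball c d, dist x y ^ (-r) := by
    rw [← hvol]
    exact setIntegral_ge_of_const_le_real measurableSet_ball measure_ball_lt_top.ne hlow hIntBall
  have step2 : (∫ y in Metric.ball c d, dist x y ^ (-r)) ≤
      ∫ y in (Metric.ball (0 : EuclideanSpace ℝ (Fin n)) 1)ᶜ, dist x y ^ (-r) := by
    apply setIntegral_mono_set hInt
    · filter_upwards with y using Real.rpow_nonneg dist_nonneg _
    · exact HasSubset.Subset.eventuallyLE hsub
  refine le_trans ?_ (step1.trans step2)
  -- arithmetic: (3d)^(-r) * (d^n * V) = 3^(-r) * V * d^(-2s)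
  have harith : (3 * d) ^ (-r) * (d ^ n * V) = (3:ℝ) ^ (-r) * V * d ^ (-(2*s)) := by
    rw [Real.mul_rpow (by norm_num) hd.le]
    have : (d:ℝ) ^ n = d ^ (n:ℝ) := (Real.rpow_natCast d n).symm
    rw [this]
    have h2 : d ^ (-r) * (d ^ (n:ℝ) * V) = d ^ (-r + (n:ℝ)) * V := by
      rw [Real.rpow_add hd]; ring
    rw [mul_assoc, h2]
    have h3 : -r + (n:ℝ) = -(2*s) := by rw [hr_def]; ring
    rw [h3]; ring
  rw [harith]
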